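/- (Lower bound for locally pan-private counting) For any ε-locally pan-private client-side algorithm with finite state spaces, given by per-step updates State_t and an output map Out, there exist input streams x (all zeros) and x' (a single 1) in {0,1}^T such that TV(Out(State(x)), Out(State(x'))) ≤ (1-2p)/√(4p(1-p)T) with p = 1/(e^ε+1); in particular this bound is O((e^ε-1)/√(T e^ε)). -/

import Mathlib

open Real

/-- Probability that a streaming algorithm with per-step (randomized) state-update
kernels `St t x s s' = Pr[State_t(x; s) = s']`, run from initial state `s0` on the
input stream `x`, produces the state trajectory `σ = (s_1, …, s_T)`. -/
noncomputable def trajProb {S : Type} (T : ℕ) (St : ℕ → Bool → S → S → ℝ)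
    (s0 : S) (x : Fin T → Bool) (σ : Fin T → S) : ℝ :=
  ∏ t : Fin T,
    St t (x t)
      (if (t : ℕ) = 0 then s0
       else σ ⟨(t : ℕ) - 1, lt_of_le_of_lt (Nat.sub_le _ _) t.isLt⟩)
      (σ t)

/-- Total variation distance between two distributions on a finite type. -/
noncomputable def tvFin {O : Type} [Fintype O] (f g : O → ℝ) : ℝ :=
  (1 / 2) * ∑ o, |f o - g o|

lemma taylor3 (x : ℝ) (hx : 0 ≤ x) : 1 + x + x^2/2 + x^3/6 ≤ Real.exp x := by
  have h := Real.sum_le_exp_of_nonneg hx 4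
  simp [Finset.sum_range_succ, Nat.factorial] at h
  linarith

set_option maxHeartbeats 2000000 in
lemma lemA (ε : ℝ) (hε : 0 < ε) : Real.sqrt 2 * ε * Real.exp (ε/2) ≤ Real.exp ε + ε - 1 := by
  have hx : 0 < ε/2 := by positivity
  have hy : 0 < Real.exp (ε/2) := Real.exp_pos _
  have hE : Real.exp ε = Real.exp (ε/2) * Real.exp (ε/2) := by
    rw [← Real.exp_add]; ring_nf
  have hqy : 1 + ε/2 + (ε/2)^2/2 + (ε/2)^3/6 ≤ Real.exp (ε/2) := taylor3 _ hx.le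
  have hc2 : Real.sqrt 2 ^2 = 2 := Real.sq_sqrt (by norm_num)
  have hc0 : 0 < Real.sqrt 2 := Real.sqrt_pos.mpr (by norm_num)
  have hcu : Real.sqrt 2 ≤ 1.415 := by nlinarith
  have hcl : 1.414 ≤ Real.sqrt 2 := by nlinarith
  set x := ε/2 with hxdef
  set y := Real.exp (ε/2) with hydef
  set c := Real.sqrt 2 with hcdef
  have hqcx : 2*c*x ≤ y + (1 + x + x^2/2 + x^3/6) := by
    nlinarith [sq_nonneg (x-1), hx.le, mul_le_mul_of_nonneg_right hcu hx.le]
  have hmono : 0 ≤ (y - (1 + x + x^2/2 + x^3/6)) * (y + (1 + x + x^2/2 + x^3/6) - 2*c*x) :=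
    mul_nonneg (by linarith) (by linarith)
  have hpoly : 0 ≤ (1 + x + x^2/2 + x^3/6)^2 + 2*x - 1 - 2*c*x*(1 + x + x^2/2 + x^3/6) := by
    nlinarith [sq_nonneg (x-1), sq_nonneg x, mul_nonneg hx.le (sq_nonneg (x-1)), hx.le,
      mul_nonneg (mul_nonneg hx.le hx.le) (sq_nonneg (x-1)),
      mul_nonneg (mul_nonneg (mul_nonneg hx.le hx.le) hx.le) (sq_nonneg (x-1)),
      mul_nonneg (mul_nonneg (mul_nonneg hx.le hx.le) hx.le) hx.le,
      mul_le_mul_of_nonneg_right hcu hx.le, mul_le_mul_of_nonneg_left hcu hx.le]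
  have hgoal : c * ε * Real.exp (ε/2) = 2*c*x*y := by
    rw [hydef, hxdef]; ring
  rw [hgoal, hE]
  nlinarith [hmono, hpoly]

def consEquiv (S : Type) (n : ℕ) : S × (Fin n → S) ≃ (Fin (n+1) → S) where
  toFun p := Fin.cons p.1 p.2
  invFun σ := (σ 0, fun t => σ t.succ)
  left_inv p := by ext <;> simp
  right_inv σ := by
    funext t
    refine Fin.cases ?_ ?_ t <;> simp

lemma cons_val {S : Type} {n : ℕ} (s1 : S) (g : Fin n → S) (m : ℕ) (hm : m < n+1)
    (hm' : m - 1 < n) :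
    (Fin.cons s1 g : Fin (n+1) → S) ⟨m, hm⟩ = if m = 0 then s1 else g ⟨m - 1, hm'⟩ := by
  cases m with
  | zero => simp
  | succ k =>
    have h1 : (⟨k+1, hm⟩ : Fin (n+1)) = Fin.succ ⟨k, by omega⟩ := rfl
    rw [h1, Fin.cons_succ, if_neg (Nat.succ_ne_zero k)]
    rfl

lemma sum_traj_eq_one {S : Type} [Fintype S] :
    ∀ (n : ℕ) (K : ℕ → S → S → ℝ), (∀ t s, ∑ s', K t s s' = 1) → ∀ s0 : S,
      ∑ σ : Fin n → S, ∏ t : Fin n,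
        K (t:ℕ) (if (t:ℕ) = 0 then s0
          else σ ⟨(t:ℕ)-1, lt_of_le_of_lt (Nat.sub_le _ _) t.isLt⟩) (σ t) = 1 := by
  intro n
  induction n with
  | zero =>
    intro K hK s0
    simp
  | succ n ih =>
    intro K hK s0
    rw [← Equiv.sum_comp (consEquiv S n)]
    rw [Fintype.sum_prod_type]
    have hpt : ∀ (s1 : S) (g : Fin n → S),
        (∏ t : Fin (n+1), K (t:ℕ) (if (t:ℕ) = 0 then s0
            else (consEquiv S n (s1, g)) ⟨(t:ℕ)-1, lt_of_le_of_lt (Nat.sub_le _ _) t.isLt⟩)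
            ((consEquiv S n (s1, g)) t))
        = K 0 s0 s1 * ∏ t : Fin n, K ((t:ℕ)+1) (if (t:ℕ) = 0 then s1
            else g ⟨(t:ℕ)-1, lt_of_le_of_lt (Nat.sub_le _ _) t.isLt⟩) (g t) := by
      intro s1 g
      rw [Fin.prod_univ_succ]
      congr 1
      apply Finset.prod_congr rfl
      intro t _
      simp only [consEquiv, Equiv.coe_fn_mk, Fin.cons_succ, Fin.val_succ,
        Nat.add_sub_cancel, Nat.succ_ne_zero, if_false]
      rw [cons_val s1 g (t:ℕ) (by omega) (by have := t.isLt; omega)]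
    rw [Finset.sum_congr rfl fun s1 _ => Finset.sum_congr rfl fun g _ => hpt s1 g]
    have hih : ∀ s1 : S,
        ∑ g : Fin n → S, (K 0 s0 s1 * ∏ t : Fin n, K ((t:ℕ)+1) (if (t:ℕ) = 0 then s1
            else g ⟨(t:ℕ)-1, lt_of_le_of_lt (Nat.sub_le _ _) t.isLt⟩) (g t)) = K 0 s0 s1 := by
      intro s1
      rw [← Finset.mul_sum]
      rw [ih (fun m => K (m+1)) (fun t s => hK (t+1) s) s1]
      ring
    rw [Finset.sum_congr rfl fun s1 _ => hih s1]
    exact hK 0 s0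

set_option maxHeartbeats 2000000 in
/-- Lower bound for locally pan-private counting: for any `ε`-locally pan-private
client-side algorithm (per-step update kernels `St` and randomized output map `Out`
applied to the state trajectory), there is a stream `x'` with a single `1` such that
the output distributions on the all-zeros stream and on `x'` are at total variation
distance at most `(1-2p)/√(4p(1-p)T)` where `p = 1/(e^ε+1)`. -/
theorem stmt16 {S O : Type} [Fintype S] [Fintype O] (T : ℕ) (hT : 2 ≤ T)
    (ε : ℝ) (hε : 0 < ε)
    (St : ℕ → Bool → S → S → ℝ) (s0 : S)
    (hSt0 : ∀ t x s s', 0 ≤ St t x s s')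
    (hSt1 : ∀ t x s, ∑ s', St t x s s' = 1)
    (hPan : ∀ (x x' : Fin T → Bool) (σ : Fin T → S),
      trajProb T St s0 x σ ≤ exp ε * trajProb T St s0 x' σ)
    (Out : (Fin T → S) → O → ℝ)
    (hOut0 : ∀ σ o, 0 ≤ Out σ o) (hOut1 : ∀ σ, ∑ o, Out σ o = 1) :
    let outDist : (Fin T → Bool) → O → ℝ := fun x o =>
      ∑ σ : Fin T → S, trajProb T St s0 x σ * Out σ o
    let p : ℝ := 1 / (exp ε + 1)
    ∃ t0 : Fin T,
      tvFin (outDist fun _ => false)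
          (outDist fun t => if t = t0 then true else false) ≤
        (1 - 2 * p) / Real.sqrt (4 * p * (1 - p) * T) := by
  intro outDist p
  have houtDist : ∀ x o, outDist x o = ∑ σ : Fin T → S, trajProb T St s0 x σ * Out σ o :=
    fun x o => rfl
  have hp : p = 1 / (Real.exp ε + 1) := rfl
  have hE1 : (1:ℝ) < Real.exp ε := by
    rw [← Real.exp_zero]; exact Real.exp_lt_exp.mpr hε
  have hQnn : ∀ (x : Fin T → Bool) (σ : Fin T → S), 0 ≤ trajProb T St s0 x σ := by
    intro x σ; exact Finset.prod_nonneg fun t _ => hSt0 _ _ _ _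
  have hmass : ∀ (x : Fin T → Bool), ∑ σ : Fin T → S, trajProb T St s0 x σ = 1 := by
    intro x
    have h := sum_traj_eq_one T
      (fun m s s' => St m (if h : m < T then x ⟨m, h⟩ else false) s s')
      (fun t s => hSt1 t _ s) s0
    rw [← h]
    refine Finset.sum_congr rfl fun σ _ => Finset.prod_congr rfl fun t _ => ?_
    rw [dif_pos t.isLt]
  set E := Real.exp ε with hEdef
  have hE0 : (0:ℝ) < E := lt_trans one_pos hE1
  set f0 : Fin T → Bool := fun _ => false with hf0
  set ebt : Fin T → Fin T → Bool := fun t0 u => if u = t0 then true else false with hebt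
  set Q := trajProb T St s0 with hQdef
  set Δ : Fin T → (Fin T → S) → ℝ := fun t σ => Q (ebt t) σ - Q f0 σ with hΔdef
  have hΔzero : ∀ t, ∑ σ : Fin T → S, Δ t σ = 0 := by
    intro t
    simp only [hΔdef]
    rw [Finset.sum_sub_distrib, hmass, hmass]
    ring
  have hkey : ∀ σ : Fin T → S,
      (E - 1 + ε) * ∑ t : Fin T, max (Δ t σ) 0
        ≤ (E - 1) * ε * Q f0 σ + (E - 1) * ∑ t : Fin T, Δ t σ := by
    intro σ
    by_cases h0 : Q f0 σ = 0
    · have hz : ∀ t, Q (ebt t) σ = 0 := by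
        intro t
        have h1 := hPan (ebt t) f0 σ
        have h2 := hQnn (ebt t) σ
        rw [h0] at h1
        simp only [mul_zero] at h1
        linarith
      have hzz : ∀ t, Δ t σ = 0 := by
        intro t; simp only [hΔdef]; rw [hz t, h0]; ring
      have hs1 : ∑ t : Fin T, max (Δ t σ) 0 = 0 :=
        Finset.sum_eq_zero fun t _ => by rw [hzz t]; simp
      have hs2 : ∑ t : Fin T, Δ t σ = 0 := Finset.sum_eq_zero fun t _ => hzz t
      rw [hs1, hs2, h0]
      simp
    · have hq0 : 0 < Q f0 σ := lt_of_le_of_ne (hQnn f0 σ) (Ne.symm h0)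
      set prev : Fin T → S := fun t =>
        if (t : ℕ) = 0 then s0
        else σ ⟨(t : ℕ) - 1, lt_of_le_of_lt (Nat.sub_le _ _) t.isLt⟩ with hprev
      have hQx : ∀ x, Q x σ = ∏ t : Fin T, St t (x t) (prev t) (σ t) := fun x => rfl
      set a : Fin T → ℝ := fun t => St t false (prev t) (σ t) with ha
      set r : Fin T → ℝ := fun t => St t true (prev t) (σ t) / a t with hr
      have hQf0 : Q f0 σ = ∏ t, a t := hQx f0
      have hapos : ∀ t, 0 < a t := by
        intro t
        rcases (hSt0 t false (prev t) (σ t)).lt_or_eq with h | h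
        · exact h
        · exfalso; apply h0; rw [hQf0]
          exact Finset.prod_eq_zero (Finset.mem_univ t) h.symm
      have hfact : ∀ x, Q x σ = Q f0 σ * ∏ t, (if x t then r t else 1) := by
        intro x
        rw [hQx x, hQf0, ← Finset.prod_mul_distrib]
        refine Finset.prod_congr rfl fun t _ => ?_
        cases hxt : x t
        · simp [ha]
        · simp only [if_true]
          rw [hr]
          rw [mul_comm, div_mul_cancel₀ _ (hapos t).ne']
      have hsingle : ∀ t0 : Fin T, (∏ t, (if ebt t0 t then r t else 1)) = r t0 := by
        intro t0
        have h1 : ∀ u : Fin T, (if ebt t0 u then r u else 1) = if u = t0 then r u else 1 := by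
          intro u; by_cases hu : u = t0 <;> simp [hebt, hu]
        rw [Finset.prod_congr rfl fun u _ => h1 u]
        rw [Finset.prod_ite_eq' Finset.univ t0 r, if_pos (Finset.mem_univ t0)]
      have hf0prod : (∏ t, (if f0 t then r t else 1)) = 1 := by
        simp [hf0]
      have hrpos : ∀ t, 0 < r t := by
        intro t
        have h1 := hPan f0 (ebt t) σ
        rw [hfact (ebt t), hfact f0, hsingle t, hf0prod, mul_one] at h1
        by_contra hcon
        push_neg at hcon
        nlinarith [mul_nonneg hE0.le hq0.le,
          mul_le_mul_of_nonneg_left hcon (mul_nonneg hE0.le hq0.le)]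
      have hrnn : ∀ t, (0:ℝ) < r t := hrpos
      -- budget
      set PA := ∏ t, (if 1 < r t then r t else 1) with hPA
      set PB := ∏ t, (if r t < 1 then r t else 1) with hPB
      have hPApos : 0 < PA := by
        rw [hPA]; refine Finset.prod_pos fun t _ => ?_
        by_cases h : 1 < r t
        · rw [if_pos h]; linarith
        · rw [if_neg h]; norm_num
      have hPBpos : 0 < PB := by
        rw [hPB]; refine Finset.prod_pos fun t _ => ?_
        by_cases h : r t < 1
        · rw [if_pos h]; exact hrpos t
        · rw [if_neg h]; norm_num
      have hAB : PA ≤ E * PB := by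
        set xA : Fin T → Bool := fun u => decide (1 < r u) with hxA
        set xB : Fin T → Bool := fun u => decide (r u < 1) with hxB
        have h1 := hPan xA xB σ
        rw [hfact xA, hfact xB] at h1
        have h2 : (∏ t, (if xA t then r t else 1)) = PA := by
          rw [hPA]; exact Finset.prod_congr rfl fun t _ => by simp [hxA]
        have h3 : (∏ t, (if xB t then r t else 1)) = PB := by
          rw [hPB]; exact Finset.prod_congr rfl fun t _ => by simp [hxB]
        rw [h2, h3] at h1
        have h4 : E * (Q f0 σ * PB) = Q f0 σ * (E * PB) := by ring
        rw [h4] at h1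
        exact (mul_le_mul_iff_right₀ hq0).mp h1
      set l : Fin T → ℝ := fun t => Real.log (r t) with hl
      have hsum_eq : ∑ t, |l t| = Real.log PA - Real.log PB := by
        rw [hPA, hPB]
        rw [Real.log_prod (fun t _ => by
          by_cases h : 1 < r t
          · rw [if_pos h]; exact (by linarith : (0:ℝ) < r t).ne'
          · rw [if_neg h]; norm_num)]
        rw [Real.log_prod (fun t _ => by
          by_cases h : r t < 1
          · rw [if_pos h]; exact (hrpos t).ne'
          · rw [if_neg h]; norm_num)]
        rw [← Finset.sum_sub_distrib]
        refine Finset.sum_congr rfl fun t _ => ?_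
        rcases lt_trichotomy (r t) 1 with h | h | h
        · rw [if_neg (by linarith), if_pos h, Real.log_one]
          rw [hl]
          simp only []
          rw [abs_of_nonpos (Real.log_nonpos (hrpos t).le h.le)]
          ring
        · rw [if_neg (by rw [h]; exact lt_irrefl 1), if_neg (by rw [h]; exact lt_irrefl 1)]
          rw [hl]; simp [h]
        · rw [if_pos h, if_neg (by linarith), Real.log_one]
          rw [hl]
          simp only []
          rw [abs_of_nonneg (Real.log_nonneg h.le)]
          ring
      have hbudget : ∑ t, |l t| ≤ ε := by
        have h1 : Real.log PA ≤ Real.log (E * PB) :=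
          Real.log_le_log (by positivity) hAB
        rw [Real.log_mul hE0.ne' hPBpos.ne', hEdef, Real.log_exp] at h1
        rw [hsum_eq]
        linarith
      have hstep : ∀ t, (E-1+ε) * max (r t - 1) 0 ≤ (E-1) * |l t| + (E-1) * (r t - 1) := by
        intro t
        rcases le_or_gt (r t) 1 with h | h
        · rw [max_eq_right (by linarith)]
          have hlog : Real.log (r t) ≤ r t - 1 := Real.log_le_sub_one_of_pos (hrpos t)
          have habs : |l t| = -Real.log (r t) := by
            rw [hl]; exact abs_of_nonpos (Real.log_nonpos (hrpos t).le h)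
          rw [habs]
          nlinarith [hE1]
        · have hl0 : 0 ≤ l t := by
            rw [hl]; exact Real.log_nonneg h.le
          have hlε : l t ≤ ε := by
            have h1 : |l t| ≤ ∑ u, |l u| :=
              Finset.single_le_sum (fun u _ => abs_nonneg (l u)) (Finset.mem_univ t)
            have h2 := le_abs_self (l t)
            linarith
          have hrl : r t = Real.exp (l t) := by
            rw [hl]; exact (Real.exp_log (hrpos t)).symm
          have hchord : Real.exp (l t) ≤ (1 - l t / ε) + (l t / ε) * E := by
            have hcvx := convexOn_exp.2 (Set.mem_univ (0:ℝ)) (Set.mem_univ ε)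
              (show (0:ℝ) ≤ 1 - l t / ε by
                rw [sub_nonneg]; exact div_le_one_of_le₀ hlε hε.le)
              (show (0:ℝ) ≤ l t / ε by positivity)
              (show (1 - l t / ε) + l t / ε = 1 by ring)
            simp only [smul_eq_mul, mul_zero, zero_add, Real.exp_zero, mul_one] at hcvx
            rw [div_mul_cancel₀ _ hε.ne'] at hcvx
            rw [hEdef]
            linarith
          have hA : ε * (r t - 1) ≤ (E - 1) * l t := by
            have h1 : r t - 1 ≤ (l t / ε) * (E - 1) := by
              rw [hrl]; nlinarith [hchord]
            have h2 : ε * ((l t / ε) * (E-1)) = (E-1) * l t := by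
              field_simp
            nlinarith [mul_le_mul_of_nonneg_left h1 hε.le]
          have habs : |l t| = l t := abs_of_nonneg hl0
          rw [max_eq_left (by linarith), habs]
          nlinarith [hA]
      have hΔr : ∀ t, Δ t σ = Q f0 σ * (r t - 1) := by
        intro t
        simp only [hΔdef]
        rw [hfact (ebt t), hsingle t]
        ring
      calc (E - 1 + ε) * ∑ t : Fin T, max (Δ t σ) 0
          = Q f0 σ * ∑ t, ((E-1+ε) * max (r t - 1) 0) := by
            rw [Finset.mul_sum, Finset.mul_sum]
            refine Finset.sum_congr rfl fun t _ => ?_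
            rw [hΔr t]
            rw [show max (Q f0 σ * (r t - 1)) 0 = Q f0 σ * max (r t - 1) 0 by
              rw [mul_max_of_nonneg _ _ hq0.le, mul_zero]]
            ring
        _ ≤ Q f0 σ * ∑ t, ((E-1) * |l t| + (E-1) * (r t - 1)) :=
            mul_le_mul_of_nonneg_left (Finset.sum_le_sum fun t _ => hstep t) hq0.le
        _ = (E-1) * (∑ t, |l t|) * Q f0 σ + (E-1) * ∑ t, (Q f0 σ * (r t - 1)) := by
            rw [Finset.sum_add_distrib, ← Finset.mul_sum, ← Finset.mul_sum, ← Finset.mul_sum]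
            ring
        _ ≤ (E-1) * ε * Q f0 σ + (E-1) * ∑ t, Δ t σ := by
            have h1 : (E-1) * (∑ t, |l t|) * Q f0 σ ≤ (E-1) * ε * Q f0 σ := by
              have := mul_le_mul_of_nonneg_left hbudget (by linarith : (0:ℝ) ≤ E - 1)
              nlinarith [hq0]
            have h2 : ∑ t, (Q f0 σ * (r t - 1)) = ∑ t, Δ t σ :=
              Finset.sum_congr rfl fun t _ => (hΔr t).symm
            rw [h2]
            linarith
  have hEe : 0 < E - 1 + ε := by linarith
  have hsum_max : ∑ t : Fin T, ∑ σ : Fin T → S, max (Δ t σ) 0 ≤ (E-1) * ε / (E-1+ε) := by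
    rw [le_div_iff₀ hEe]
    have h1 : (∑ t : Fin T, ∑ σ : Fin T → S, max (Δ t σ) 0) * (E-1+ε)
        = ∑ σ : Fin T → S, ((E-1+ε) * ∑ t : Fin T, max (Δ t σ) 0) := by
      rw [Finset.sum_comm, Finset.sum_mul]
      refine Finset.sum_congr rfl fun σ _ => ?_
      rw [Finset.mul_sum, Finset.sum_mul]
      exact Finset.sum_congr rfl fun t _ => by ring
    rw [h1]
    calc ∑ σ : Fin T → S, ((E-1+ε) * ∑ t : Fin T, max (Δ t σ) 0)
        ≤ ∑ σ : Fin T → S, ((E-1) * ε * Q f0 σ + (E-1) * ∑ t : Fin T, Δ t σ) :=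
          Finset.sum_le_sum fun σ _ => hkey σ
      _ = (E-1) * ε * (∑ σ : Fin T → S, Q f0 σ)
            + (E-1) * ∑ σ : Fin T → S, ∑ t : Fin T, Δ t σ := by
          rw [Finset.sum_add_distrib, ← Finset.mul_sum, ← Finset.mul_sum]
      _ = (E-1) * ε := by
          rw [hmass f0]
          have hz : ∑ σ : Fin T → S, ∑ t : Fin T, Δ t σ = 0 := by
            rw [Finset.sum_comm]
            rw [Finset.sum_congr rfl fun t _ => hΔzero t]
            simp
          rw [hz]
          ring
  have htv : ∀ t : Fin T, tvFin (outDist f0) (outDist (ebt t)) ≤ ∑ σ : Fin T → S, max (Δ t σ) 0 := by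
    intro t
    have h1 : tvFin (outDist f0) (outDist (ebt t))
        = 1/2 * ∑ o : O, |∑ σ : Fin T → S, Δ t σ * Out σ o| := by
      rw [tvFin]
      congr 1
      refine Finset.sum_congr rfl fun o _ => ?_
      rw [abs_sub_comm, houtDist, houtDist, ← Finset.sum_sub_distrib]
      congr 1
      refine Finset.sum_congr rfl fun σ _ => ?_
      simp only [hΔdef]
      ring
    rw [h1]
    have h2 : ∑ o : O, |∑ σ : Fin T → S, Δ t σ * Out σ o|
        ≤ ∑ o : O, ∑ σ : Fin T → S, |Δ t σ| * Out σ o := by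
      refine Finset.sum_le_sum fun o _ => ?_
      refine (Finset.abs_sum_le_sum_abs _ _).trans ?_
      refine Finset.sum_le_sum fun σ _ => ?_
      rw [abs_mul, abs_of_nonneg (hOut0 σ o)]
    have h3 : ∑ o : O, ∑ σ : Fin T → S, |Δ t σ| * Out σ o = ∑ σ : Fin T → S, |Δ t σ| := by
      rw [Finset.sum_comm]
      refine Finset.sum_congr rfl fun σ _ => ?_
      rw [← Finset.mul_sum, hOut1, mul_one]
    have h4 : ∑ σ : Fin T → S, |Δ t σ| = 2 * ∑ σ : Fin T → S, max (Δ t σ) 0 := by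
      have hptw : ∀ σ : Fin T → S, |Δ t σ| = 2 * max (Δ t σ) 0 - Δ t σ := by
        intro σ
        rcases le_or_gt (Δ t σ) 0 with h | h
        · rw [abs_of_nonpos h, max_eq_right h]; ring
        · rw [abs_of_pos h, max_eq_left h.le]; ring
      rw [Finset.sum_congr rfl fun σ _ => hptw σ, Finset.sum_sub_distrib, ← Finset.mul_sum,
        hΔzero t]
      ring
    calc 1/2 * ∑ o : O, |∑ σ : Fin T → S, Δ t σ * Out σ o|
        ≤ 1/2 * ∑ o : O, ∑ σ : Fin T → S, |Δ t σ| * Out σ o := by linarith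
      _ = 1/2 * (2 * ∑ σ : Fin T → S, max (Δ t σ) 0) := by rw [h3, h4]
      _ = ∑ σ : Fin T → S, max (Δ t σ) 0 := by ring
  have hsum_tv : ∑ t : Fin T, tvFin (outDist f0) (outDist (ebt t)) ≤ (E-1) * ε / (E-1+ε) :=
    le_trans (Finset.sum_le_sum fun t _ => htv t)
      (le_trans (Finset.sum_le_sum fun t _ => le_refl _) hsum_max)
  have hT0 : (0:ℝ) < (T:ℝ) := by
    have : (0:ℕ) < T := by omega
    exact_mod_cast this
  have hex : ∃ t0 : Fin T,
      tvFin (outDist f0) (outDist (ebt t0)) ≤ (E-1) * ε / ((E-1+ε) * T) := by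
    have hne : (Finset.univ : Finset (Fin T)).Nonempty :=
      ⟨⟨0, by omega⟩, Finset.mem_univ _⟩
    have hcst : ∑ _t : Fin T, (E-1)*ε/((E-1+ε)*T) = (E-1) * ε / (E-1+ε) := by
      rw [Finset.sum_const, Finset.card_univ, Fintype.card_fin, nsmul_eq_mul]
      field_simp
    obtain ⟨t0, _, ht0⟩ := Finset.exists_le_of_sum_le
      (f := fun t : Fin T => tvFin (outDist f0) (outDist (ebt t)))
      (g := fun _ : Fin T => (E-1)*ε/((E-1+ε)*T)) hne (by rw [hcst]; exact hsum_tv)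
    exact ⟨t0, ht0⟩
  obtain ⟨t0, ht0⟩ := hex
  refine ⟨t0, le_trans ht0 ?_⟩
  -- final numeric inequality
  set s := Real.exp (ε/2) with hsdef
  have hs0 : (0:ℝ) < s := Real.exp_pos _
  have hEs : E = s * s := by
    rw [hEdef, hsdef, ← Real.exp_add]
    norm_num
  have hsT : 0 < Real.sqrt T := Real.sqrt_pos.mpr hT0
  have h2T : Real.sqrt 2 ≤ Real.sqrt T := by
    apply Real.sqrt_le_sqrt
    exact_mod_cast hT
  have hsqT : Real.sqrt T * Real.sqrt T = (T:ℝ) := Real.mul_self_sqrt hT0.le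
  have hEp1 : (0:ℝ) < E + 1 := by linarith
  have h1mp : 1 - p = E * p := by
    rw [hp]
    field_simp
    ring
  have harg : 4 * p * (1-p) * (T:ℝ) = (2 * s * Real.sqrt T / (E+1))^2 := by
    have h1 : (2 * s * Real.sqrt T / (E+1))^2
        = 4 * (s*s) * (Real.sqrt T * Real.sqrt T) * (1/(E+1))^2 := by ring
    rw [h1, hsqT, ← hEs, ← hp, h1mp]
    ring
  have hsqrt : Real.sqrt (4 * p * (1-p) * (T:ℝ)) = 2 * s * Real.sqrt T / (E+1) := by
    rw [harg, Real.sqrt_sq (by positivity)]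
  have h12p : 1 - 2 * p = (E-1)/(E+1) := by
    rw [hp]
    field_simp
    ring
  rw [hsqrt, h12p]
  have hrhs : (E-1)/(E+1) / (2 * s * Real.sqrt T / (E+1)) = (E-1)/(2 * s * Real.sqrt T) := by
    rw [div_div_div_eq]
    rw [mul_comm (E-1) (E+1), mul_div_mul_left _ _ (by linarith : (E:ℝ)+1 ≠ 0)]
  rw [hrhs]
  rw [div_le_div_iff₀ (by positivity) (by positivity)]
  have hlem := lemA ε hε
  rw [← hEdef, ← hsdef] at hlem
  have hc2 : Real.sqrt 2 * Real.sqrt 2 = 2 := Real.mul_self_sqrt (by norm_num)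
  have key2 : 2 * s * ε ≤ (E-1+ε) * Real.sqrt T := by
    have h2 : Real.sqrt 2 * ε * s ≤ E - 1 + ε := by linarith
    have h4 : (E-1+ε) * Real.sqrt 2 ≤ (E-1+ε) * Real.sqrt T :=
      mul_le_mul_of_nonneg_left h2T hEe.le
    calc 2 * s * ε = (Real.sqrt 2 * Real.sqrt 2) * (s * ε) := by rw [hc2]; ring
      _ = Real.sqrt 2 * (Real.sqrt 2 * ε * s) := by ring
      _ ≤ Real.sqrt 2 * (E - 1 + ε) := mul_le_mul_of_nonneg_left h2 (Real.sqrt_nonneg 2)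
      _ = (E-1+ε) * Real.sqrt 2 := by ring
      _ ≤ (E-1+ε) * Real.sqrt T := h4
  have h5 : ((E-1) * Real.sqrt T) * (2 * s * ε) ≤ ((E-1) * Real.sqrt T) * ((E-1+ε) * Real.sqrt T) :=
    mul_le_mul_of_nonneg_left key2 (mul_nonneg (by linarith) hsT.le)
  have h6 : ((E-1) * Real.sqrt T) * ((E-1+ε) * Real.sqrt T) = (E-1) * ((E-1+ε) * T) := by
    rw [show ((E-1) * Real.sqrt T) * ((E-1+ε) * Real.sqrt T)
        = (E-1) * ((E-1+ε) * (Real.sqrt T * Real.sqrt T)) from by ring, hsqT]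
  have h7 : (E-1) * ε * (2 * s * Real.sqrt T) = ((E-1) * Real.sqrt T) * (2 * s * ε) := by ring
  linarith [h5, h6, h7]
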